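/- Fix K : ℕ and a finite type ι (the common local register). For each i : Fin K let α i, β i be finite answer types, S i ⊆ (α i) × (β i) accepted sets, and let M i : α i → Matrix ι ι ℂ and N i : β i → Matrix ι ι ℂ be families of positive semidefinite matrices with ∑_a M i a = 1 and ∑_b N i b = 1, such that measurement operators of distinct games commute within each player: for i ≠ j, (M i a) * (M j a') = (M j a') * (M i a) for all a, a', and likewise (N i b) * (N j b') = (N j b') * (N i b). Suppose Ψ : ι × ι → ℂ is a unit vector achieving every game perfectly: for each i, ∑_{(a,b) ∈ S i} ⟨Ψ, (M i a ⊗ N i b) Ψ⟩ = 1. Then the joint product strategy wins all K games simultaneously with probability 1: ∑ over all tuples (a⃗, b⃗) with (a⃗ i, b⃗ i) ∈ S i for every i of ⟨Ψ, ((∏_i M i (a⃗ i)) ⊗ (∏_i N i (b⃗ i))) Ψ⟩ = 1, where the products over i are taken in the order of Fin K (well defined across games by the commutation hypothesis). -/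

import Mathlib

open Matrix
open scoped Kronecker ComplexOrder

section Aux

variable {ι : Type} [Fintype ι] [DecidableEq ι]

private lemma kron_conjTranspose (A B : Matrix ι ι ℂ) :
    (A ⊗ₖ B)ᴴ = Aᴴ ⊗ₖ Bᴴ := by
  ext ⟨i, j⟩ ⟨k, l⟩
  simp [Matrix.conjTranspose_apply, Matrix.kroneckerMap_apply, star_mul']

private lemma kron_posSemidef {A B : Matrix ι ι ℂ}
    (hA : A.PosSemidef) (hB : B.PosSemidef) : (A ⊗ₖ B).PosSemidef := by
  exact hA.kronecker hB

private lemma sum_kronecker' {γ : Type*} (s : Finset γ)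
    (f : γ → Matrix ι ι ℂ) (B : Matrix ι ι ℂ) :
    (∑ x ∈ s, f x) ⊗ₖ B = ∑ x ∈ s, f x ⊗ₖ B := by
  classical
  induction s using Finset.induction with
  | empty => simp [Matrix.zero_kronecker]
  | insert _ _ h ih => simp [Finset.sum_insert h, Matrix.add_kronecker, ih]

private lemma kronecker_sum' {γ : Type*} (s : Finset γ)
    (A : Matrix ι ι ℂ) (f : γ → Matrix ι ι ℂ) :
    A ⊗ₖ (∑ x ∈ s, f x) = ∑ x ∈ s, A ⊗ₖ f x := by
  classical
  induction s using Finset.induction with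
  | empty => simp [Matrix.kronecker_zero]
  | insert _ _ h ih => simp [Finset.sum_insert h, Matrix.kronecker_add, ih]

private lemma sum_mulVec' {γ : Type*} (s : Finset γ)
    (A : γ → Matrix ι ι ℂ) (v : ι → ℂ) :
    (∑ x ∈ s, A x) *ᵥ v = ∑ x ∈ s, A x *ᵥ v := by
  classical
  induction s using Finset.induction with
  | empty => simp
  | insert _ _ h ih => simp [Finset.sum_insert h, Matrix.add_mulVec, ih]

private lemma dotProduct_sum' {γ : Type*} (s : Finset γ)
    (u : ι → ℂ) (f : γ → ι → ℂ) :
    u ⬝ᵥ (∑ x ∈ s, f x) = ∑ x ∈ s, u ⬝ᵥ f x := by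
  classical
  induction s using Finset.induction with
  | empty => simp
  | insert _ _ h ih => simp [Finset.sum_insert h, dotProduct_add, ih]

private lemma list_ofFn_kron : ∀ (n : ℕ) (f g : Fin n → Matrix ι ι ℂ),
    (List.ofFn f).prod ⊗ₖ (List.ofFn g).prod =
      (List.ofFn fun i => f i ⊗ₖ g i).prod
  | 0, f, g => by simp [Matrix.one_kronecker_one]
  | (n+1), f, g => by
      simp only [List.ofFn_succ, List.prod_cons, Matrix.mul_kronecker_mul]
      rw [list_ofFn_kron n (fun i => f i.succ) (fun i => g i.succ)]

private lemma list_prod_fix (Ψ : ι × ι → ℂ) :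
    ∀ (l : List (Matrix (ι × ι) (ι × ι) ℂ)), (∀ A ∈ l, A *ᵥ Ψ = Ψ) →
      l.prod *ᵥ Ψ = Ψ
  | [], _ => by simp
  | (A :: l), h => by
      rw [List.prod_cons, ← Matrix.mulVec_mulVec,
        list_prod_fix Ψ l (fun B hB => h B (List.mem_cons_of_mem _ hB)),
        h A List.mem_cons_self]

/-- Expansion of an ordered product of sums in a (noncommutative) ring. -/
private lemma list_prod_sum {R : Type*} [NonAssocSemiring R] :
    ∀ (n : ℕ) (γ : Fin n → Type) [∀ i, Fintype (γ i)] [∀ i, DecidableEq (γ i)]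
      (t : ∀ i, Finset (γ i)) (f : ∀ i, γ i → R),
      (List.ofFn fun i => ∑ x ∈ t i, f i x).prod =
        ∑ x ∈ Fintype.piFinset t, (List.ofFn fun i => f i (x i)).prod
  | 0, γ, _, _, t, f => by simp
  | (n+1), γ, _, _, t, f => by
      rw [List.ofFn_succ, List.prod_cons,
        list_prod_sum n (fun i => γ i.succ) (fun i => t i.succ)
          (fun i => f i.succ), Finset.sum_mul_sum]
      rw [← Finset.sum_product']
      refine Finset.sum_nbij' (fun p => Fin.cons p.1 p.2)
        (fun x => (x 0, Fin.tail x)) ?_ ?_ ?_ ?_ ?_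
      · intro p hp
        show Fin.cons p.1 p.2 ∈ Fintype.piFinset t
        rw [Fin.mem_piFinset_iff_zero_tail, Fin.cons_zero, Fin.tail_cons]
        exact Finset.mem_product.mp hp
      · intro x hx
        rw [Fin.mem_piFinset_iff_zero_tail] at hx
        exact Finset.mem_product.mpr hx
      · intro p _; simp
      · intro x _; exact Fin.cons_self_tail x
      · intro p _
        rw [List.ofFn_succ, List.prod_cons]
        simp only [Fin.cons_zero, Fin.cons_succ]

end Aux

/-- Commuting embeddings on a common register: the joint product strategy wins
all `K` games simultaneously with probability 1. -/
theorem compressed_parallel_games_perfect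
    (K : ℕ) (ι : Type) [Fintype ι] [DecidableEq ι]
    (α β : Fin K → Type)
    [∀ i, Fintype (α i)] [∀ i, DecidableEq (α i)]
    [∀ i, Fintype (β i)] [∀ i, DecidableEq (β i)]
    (S : ∀ i, Finset (α i × β i))
    (M : ∀ i, α i → Matrix ι ι ℂ)
    (N : ∀ i, β i → Matrix ι ι ℂ)
    (hMpos : ∀ i a, (M i a).PosSemidef)
    (hNpos : ∀ i b, (N i b).PosSemidef)
    (hMsum : ∀ i, ∑ a, M i a = 1)
    (hNsum : ∀ i, ∑ b, N i b = 1)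
    (hMcomm : ∀ i j, i ≠ j → ∀ a a', M i a * M j a' = M j a' * M i a)
    (hNcomm : ∀ i j, i ≠ j → ∀ b b', N i b * N j b' = N j b' * N i b)
    (Ψ : ι × ι → ℂ)
    (hunit : star Ψ ⬝ᵥ Ψ = 1)
    (hperf : ∀ i, ∑ ab ∈ S i,
        star Ψ ⬝ᵥ (((M i ab.1) ⊗ₖ (N i ab.2)) *ᵥ Ψ) = 1) :
    ∑ ab ∈ Finset.univ.filter
        (fun ab : (∀ i, α i) × (∀ i, β i) => ∀ i, (ab.1 i, ab.2 i) ∈ S i),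
      star Ψ ⬝ᵥ
        (((List.ofFn fun i => M i (ab.1 i)).prod ⊗ₖ
            (List.ofFn fun i => N i (ab.2 i)).prod) *ᵥ Ψ) = 1 := by
  classical
  -- the full sum of Kronecker operators is the identity
  have hfull : ∀ i : Fin K,
      ∑ ab : α i × β i, (M i ab.1) ⊗ₖ (N i ab.2) = 1 := by
    intro i
    rw [Fintype.sum_prod_type]
    simp_rw [← kronecker_sum', ← sum_kronecker', hMsum i, hNsum i,
      Matrix.one_kronecker_one]
  -- each accepted-set operator fixes Ψ
  have hfix : ∀ i : Fin K,
      (∑ ab ∈ S i, (M i ab.1) ⊗ₖ (N i ab.2)) *ᵥ Ψ = Ψ := by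
    intro i
    have hpsd : ∀ ab : α i × β i, ((M i ab.1) ⊗ₖ (N i ab.2)).PosSemidef :=
      fun ab => kron_posSemidef (hMpos i ab.1) (hNpos i ab.2)
    have hnonneg : ∀ ab : α i × β i,
        0 ≤ star Ψ ⬝ᵥ (((M i ab.1) ⊗ₖ (N i ab.2)) *ᵥ Ψ) :=
      fun ab => (hpsd ab).dotProduct_mulVec_nonneg Ψ
    have htotal : ∑ ab : α i × β i,
        star Ψ ⬝ᵥ (((M i ab.1) ⊗ₖ (N i ab.2)) *ᵥ Ψ) = 1 := by
      rw [← dotProduct_sum', ← sum_mulVec', hfull i, Matrix.one_mulVec, hunit]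
    have hsplit := Finset.sum_sdiff (Finset.subset_univ (S i))
      (f := fun ab : α i × β i =>
        star Ψ ⬝ᵥ (((M i ab.1) ⊗ₖ (N i ab.2)) *ᵥ Ψ))
    rw [htotal, hperf i] at hsplit
    have hzero : ∑ ab ∈ Finset.univ \ S i,
        star Ψ ⬝ᵥ (((M i ab.1) ⊗ₖ (N i ab.2)) *ᵥ Ψ) = 0 := by
      linear_combination hsplit
    have hterm : ∀ ab ∈ Finset.univ \ S i,
        star Ψ ⬝ᵥ (((M i ab.1) ⊗ₖ (N i ab.2)) *ᵥ Ψ) = 0 :=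
      (Finset.sum_eq_zero_iff_of_nonneg fun ab _ => hnonneg ab).mp hzero
    have hvec : ∀ ab ∈ Finset.univ \ S i,
        ((M i ab.1) ⊗ₖ (N i ab.2)) *ᵥ Ψ = 0 := fun ab hab =>
      ((hpsd ab).dotProduct_mulVec_zero_iff Ψ).mp (hterm ab hab)
    have := Finset.sum_sdiff (Finset.subset_univ (S i))
      (f := fun ab : α i × β i => ((M i ab.1) ⊗ₖ (N i ab.2)) *ᵥ Ψ)
    rw [Finset.sum_eq_zero hvec, zero_add] at this
    rw [sum_mulVec', this, ← sum_mulVec', hfull i, Matrix.one_mulVec]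
  -- rewrite each term via the Kronecker product of list products
  have hrw : ∀ ab : (∀ i, α i) × (∀ i, β i),
      (List.ofFn fun i => M i (ab.1 i)).prod ⊗ₖ
        (List.ofFn fun i => N i (ab.2 i)).prod =
      (List.ofFn fun i => (M i (ab.1 i)) ⊗ₖ (N i (ab.2 i))).prod :=
    fun ab => list_ofFn_kron K _ _
  simp only [hrw]
  -- convert the filtered sum to a sum over `piFinset S`
  have hbij : ∑ ab ∈ Finset.univ.filter
        (fun ab : (∀ i, α i) × (∀ i, β i) => ∀ i, (ab.1 i, ab.2 i) ∈ S i),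
      star Ψ ⬝ᵥ
        ((List.ofFn fun i => (M i (ab.1 i)) ⊗ₖ (N i (ab.2 i))).prod *ᵥ Ψ) =
      ∑ x ∈ Fintype.piFinset S,
        star Ψ ⬝ᵥ
          ((List.ofFn fun i => (M i (x i).1) ⊗ₖ (N i (x i).2)).prod *ᵥ Ψ) := by
    refine Finset.sum_nbij' (fun ab => fun i => (ab.1 i, ab.2 i))
      (fun x => (fun i => (x i).1, fun i => (x i).2)) ?_ ?_ ?_ ?_ ?_
    · intro ab hab
      rw [Fintype.mem_piFinset]
      exact fun i => (Finset.mem_filter.mp hab).2 i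
    · intro x hx
      rw [Finset.mem_filter]
      exact ⟨Finset.mem_univ _, fun i => Fintype.mem_piFinset.mp hx i⟩
    · intro ab _; rfl
    · intro x _; rfl
    · intro ab _; rfl
  rw [hbij, ← dotProduct_sum', ← sum_mulVec',
    ← list_prod_sum K (fun i => α i × β i) S
      (fun i ab => (M i ab.1) ⊗ₖ (N i ab.2)),
    list_prod_fix Ψ _ ?_, hunit]
  intro A hA
  rw [List.mem_ofFn] at hA
  obtain ⟨i, rfl⟩ := hA
  exact hfix i
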